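/- Let n ≥ 1, let μ : Finset (Fin n) → ℝ satisfy μ(∅) = 0, and let m be its Möbius transform. Assume μ is 2-additive, i.e., m(T) = 0 for all T with |T| ≥ 3. Let x : Fin n → ℝ with x_i ≥ 0 for all i, and let σ be any permutation of Fin n sorting x nondecreasingly. Then the Choquet sum satisfies S(μ, x, σ) = Σ_i m({i})·x_i + Σ_{i<j} m({i,j})·min(x_i, x_j). -/

import Mathlib

/-- The Choquet sum of a nonnegative vector `x` with respect to a set function `μ`
along a permutation `σ` sorting `x` nondecreasingly:
`S(μ, x, σ) = ∑_{i=0}^{n-1} (x (σ i) − x (σ (i−1))) · μ {j : x (σ i) ≤ x j}`,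
with the convention `x (σ (−1)) = 0`. -/
noncomputable def choquetSum {n : ℕ} (μ : Finset (Fin n) → ℝ) (x : Fin n → ℝ)
    (σ : Equiv.Perm (Fin n)) : ℝ :=
  ∑ i : Fin n,
    (x (σ i) -
        (if h : (i : ℕ) = 0 then 0
          else x (σ ⟨(i : ℕ) - 1, by have := i.isLt; omega⟩))) *
      μ (Finset.univ.filter (fun j => x (σ i) ≤ x j))

lemma tele {n : ℕ} (f : Fin n → ℝ) (hf : Monotone f) (c : ℝ) (k : Fin n)
    (hk : f k ≤ c) (hk' : ∀ i, f i ≤ c → i ≤ k) :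
    ∑ i : Fin n,
      (f i - (if h : (i : ℕ) = 0 then 0
          else f ⟨(i : ℕ) - 1, by have := i.isLt; omega⟩)) *
        (if f i ≤ c then (1:ℝ) else 0) = f k := by
  set G : ℕ → ℝ := fun j => if h : 0 < j ∧ j ≤ n then f ⟨j - 1, by omega⟩ else 0 with hG
  set F : ℕ → ℝ := fun j => if j < (k : ℕ) + 1 then G (j + 1) - G j else 0 with hF
  have key : ∀ i : Fin n,
      (f i - (if h : (i : ℕ) = 0 then 0
          else f ⟨(i : ℕ) - 1, by have := i.isLt; omega⟩)) *
        (if f i ≤ c then (1:ℝ) else 0) = F (i : ℕ) := by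
    intro i
    by_cases hle : (i : ℕ) ≤ (k : ℕ)
    · have hfi : f i ≤ c := le_trans (hf (by exact_mod_cast hle : i ≤ k)) hk
      have h1 : G ((i : ℕ) + 1) = f i := by
        simp only [hG]
        rw [dif_pos ⟨Nat.succ_pos _, i.isLt⟩]
        exact congrArg f (Fin.ext (Nat.succ_sub_one _))
      have h2 : G (i : ℕ) = if h : (i : ℕ) = 0 then 0
          else f ⟨(i : ℕ) - 1, by have := i.isLt; omega⟩ := by
        by_cases h0 : (i : ℕ) = 0
        · simp [hG, h0]
        · rw [dif_neg h0, hG]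
          simp only
          rw [dif_pos ⟨by omega, by have := i.isLt; omega⟩]
      rw [if_pos hfi, mul_one, hF]
      simp only
      rw [if_pos (by omega), h1, h2]
    · have hfi : ¬ f i ≤ c := fun h => hle (by exact_mod_cast hk' i h)
      rw [if_neg hfi, mul_zero, hF]
      simp only
      rw [if_neg (by omega)]
  calc ∑ i : Fin n, _ = ∑ i : Fin n, F (i : ℕ) := Finset.sum_congr rfl (fun i _ => key i)
    _ = ∑ j ∈ Finset.range n, F j := Fin.sum_univ_eq_sum_range F n
    _ = ∑ j ∈ (Finset.range n).filter (· < (k:ℕ) + 1), (G (j+1) - G j) := by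
        rw [Finset.sum_filter]
    _ = ∑ j ∈ Finset.range ((k:ℕ) + 1), (G (j+1) - G j) := by
        congr 1
        ext j
        simp only [Finset.mem_filter, Finset.mem_range]
        have := k.isLt
        omega
    _ = G ((k:ℕ)+1) - G 0 := Finset.sum_range_sub G ((k:ℕ)+1)
    _ = f k := by
        simp only [hG]
        rw [dif_pos ⟨Nat.succ_pos _, k.isLt⟩, dif_neg (by omega)]
        simp only [Nat.add_sub_cancel, sub_zero]

lemma Tval {n : ℕ} (x : Fin n → ℝ) (σ : Equiv.Perm (Fin n))
    (hσ : Monotone fun i => x (σ i)) (S : Finset (Fin n)) (hS : S.Nonempty) :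
    ∑ i : Fin n,
      (x (σ i) - (if h : (i : ℕ) = 0 then 0
          else x (σ ⟨(i : ℕ) - 1, by have := i.isLt; omega⟩))) *
        (if S ⊆ Finset.univ.filter (fun j => x (σ i) ≤ x j) then (1:ℝ) else 0)
      = S.inf' hS x := by
  set c := S.inf' hS x with hc
  have hiff : ∀ i : Fin n,
      (S ⊆ Finset.univ.filter (fun j => x (σ i) ≤ x j)) ↔ x (σ i) ≤ c := by
    intro i
    rw [hc, Finset.le_inf'_iff]
    constructor
    · intro h b hb
      have := h hb
      simp only [Finset.mem_filter] at this
      exact this.2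
    · intro h b hb
      simp only [Finset.mem_filter, Finset.mem_univ, true_and]
      exact h b hb
  obtain ⟨j₀, hj₀, hj₀v⟩ := Finset.exists_mem_eq_inf' hS x
  have hi₀ : x (σ (σ.symm j₀)) ≤ c :=
    le_of_eq ((congrArg x (σ.apply_symm_apply j₀)).trans (hc.trans hj₀v).symm)
  have hKne : ((Finset.univ.filter fun i => x (σ i) ≤ c)).Nonempty :=
    ⟨σ.symm j₀, by simp only [Finset.mem_filter, Finset.mem_univ, true_and]; exact hi₀⟩
  set k := (Finset.univ.filter fun i => x (σ i) ≤ c).max' hKne with hk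
  have hkmem := (Finset.univ.filter fun i => x (σ i) ≤ c).max'_mem hKne
  simp only [Finset.mem_filter] at hkmem
  have hkle : x (σ k) ≤ c := hkmem.2
  have hk' : ∀ i : Fin n, x (σ i) ≤ c → i ≤ k := by
    intro i hi
    exact Finset.le_max' _ i (by simp [hi])
  have := tele (fun i => x (σ i)) hσ c k hkle hk'
  calc _ = ∑ i : Fin n,
      (x (σ i) - (if h : (i : ℕ) = 0 then 0
          else x (σ ⟨(i : ℕ) - 1, by have := i.isLt; omega⟩))) *
        (if x (σ i) ≤ c then (1:ℝ) else 0) := by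
        refine Finset.sum_congr rfl fun i _ => ?_
        rw [if_congr (hiff i) rfl rfl]
    _ = x (σ k) := this
    _ = c := le_antisymm hkle (by
        have hle : σ.symm j₀ ≤ k := hk' _ hi₀
        have := hσ hle
        simp only [Equiv.apply_symm_apply] at this
        exact le_of_eq (hc.trans hj₀v) |>.trans this)

/-- For a 2-additive capacity (its Möbius transform `m` vanishes on sets of
cardinality ≥ 3), the Choquet sum reduces to
`∑ i, m {i} · x i + ∑_{i<j} m {i,j} · min (x i) (x j)`. -/
theorem choquetSum_twoAdditive {n : ℕ} (hn : 1 ≤ n)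
    (μ : Finset (Fin n) → ℝ) (hμ0 : μ ∅ = 0)
    (m : Finset (Fin n) → ℝ)
    (hm : ∀ T : Finset (Fin n), μ T = ∑ S ∈ T.powerset, m S)
    (h2add : ∀ T : Finset (Fin n), 3 ≤ T.card → m T = 0)
    (x : Fin n → ℝ) (hx : ∀ i, 0 ≤ x i)
    (σ : Equiv.Perm (Fin n)) (hσ : Monotone fun i => x (σ i)) :
    choquetSum μ x σ =
      ∑ i : Fin n, m {i} * x i +
        ∑ p ∈ Finset.univ.filter (fun p : Fin n × Fin n => p.1 < p.2),
          m {p.1, p.2} * min (x p.1) (x p.2) := by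
  classical
  have hm0 : m ∅ = 0 := by
    have h := hm ∅
    rw [hμ0, Finset.powerset_empty, Finset.sum_singleton] at h
    exact h.symm
  set T : Finset (Fin n) → ℝ := fun S => ∑ i : Fin n,
      (x (σ i) - (if h : (i : ℕ) = 0 then 0
          else x (σ ⟨(i : ℕ) - 1, by have := i.isLt; omega⟩))) *
        (if S ⊆ Finset.univ.filter (fun j => x (σ i) ≤ x j) then (1:ℝ) else 0)
    with hT
  have step1 : choquetSum μ x σ = ∑ S : Finset (Fin n), m S * T S := by
    unfold choquetSum
    have : ∀ i : Fin n, μ (Finset.univ.filter (fun j => x (σ i) ≤ x j))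
        = ∑ S : Finset (Fin n),
            (if S ⊆ Finset.univ.filter (fun j => x (σ i) ≤ x j) then m S else 0) := by
      intro i
      rw [hm, ← Finset.sum_filter]
      congr 1
      ext S
      simp [Finset.mem_powerset]
    calc _ = ∑ i : Fin n, ∑ S : Finset (Fin n),
          (x (σ i) - (if h : (i : ℕ) = 0 then 0
            else x (σ ⟨(i : ℕ) - 1, by have := i.isLt; omega⟩))) *
          (if S ⊆ Finset.univ.filter (fun j => x (σ i) ≤ x j) then m S else 0) := by
          refine Finset.sum_congr rfl fun i _ => ?_
          rw [this i, Finset.mul_sum]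
      _ = ∑ S : Finset (Fin n), ∑ i : Fin n,
          (x (σ i) - (if h : (i : ℕ) = 0 then 0
            else x (σ ⟨(i : ℕ) - 1, by have := i.isLt; omega⟩))) *
          (if S ⊆ Finset.univ.filter (fun j => x (σ i) ≤ x j) then m S else 0) :=
          Finset.sum_comm
      _ = ∑ S : Finset (Fin n), m S * T S := by
          refine Finset.sum_congr rfl fun S _ => ?_
          rw [hT, Finset.mul_sum]
          refine Finset.sum_congr rfl fun i _ => ?_
          split_ifs <;> ring
  have step2 : ∑ S : Finset (Fin n), m S * T S =
      (∑ S ∈ Finset.univ.filter (fun S : Finset (Fin n) => S.card = 1), m S * T S) +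
      (∑ S ∈ Finset.univ.filter (fun S : Finset (Fin n) => S.card = 2), m S * T S) := by
    rw [Finset.sum_filter, Finset.sum_filter, ← Finset.sum_add_distrib]
    refine Finset.sum_congr rfl fun S _ => ?_
    by_cases h1 : S.card = 1
    · rw [if_pos h1, if_neg (by omega), add_zero]
    · by_cases h2 : S.card = 2
      · rw [if_neg h1, if_pos h2, zero_add]
      · rw [if_neg h1, if_neg h2, add_zero]
        by_cases h0 : S.card = 0
        · rw [Finset.card_eq_zero] at h0
          rw [h0, hm0, zero_mul]
        · rw [h2add S (by omega), zero_mul]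
  have hsing : ∀ i : Fin n, T ({i} : Finset (Fin n)) = x i := by
    intro i
    have h := Tval x σ hσ {i} (Finset.singleton_nonempty i)
    simp only [hT]
    rw [h]
    simp
  have hpair : ∀ i j : Fin n, T ({i, j} : Finset (Fin n)) = min (x i) (x j) := by
    intro i j
    have h := Tval x σ hσ {i, j} (Finset.insert_nonempty _ _)
    simp only [hT]
    rw [h, Finset.inf'_insert, Finset.inf'_singleton]
    exact Finset.singleton_nonempty j
  have himg1 : Finset.univ.filter (fun S : Finset (Fin n) => S.card = 1)
      = Finset.univ.image (fun i : Fin n => ({i} : Finset (Fin n))) := by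
    ext S
    simp only [Finset.mem_filter, Finset.mem_univ, true_and, Finset.mem_image,
      Finset.card_eq_one]
    constructor
    · rintro ⟨a, rfl⟩; exact ⟨a, rfl⟩
    · rintro ⟨a, rfl⟩; exact ⟨a, rfl⟩
  have himg2 : Finset.univ.filter (fun S : Finset (Fin n) => S.card = 2)
      = (Finset.univ.filter (fun p : Fin n × Fin n => p.1 < p.2)).image
          (fun p => ({p.1, p.2} : Finset (Fin n))) := by
    ext S
    simp only [Finset.mem_filter, Finset.mem_univ, true_and, Finset.mem_image,
      Finset.card_eq_two]
    constructor
    · rintro ⟨a, b, hab, rfl⟩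
      rcases lt_or_gt_of_ne hab with h | h
      · exact ⟨(a, b), h, rfl⟩
      · exact ⟨(b, a), h, by rw [Finset.pair_comm]⟩
    · rintro ⟨p, hp, rfl⟩
      exact ⟨p.1, p.2, ne_of_lt hp, rfl⟩
  have hinj : ∀ p ∈ Finset.univ.filter (fun p : Fin n × Fin n => p.1 < p.2),
      ∀ q ∈ Finset.univ.filter (fun p : Fin n × Fin n => p.1 < p.2),
      ({p.1, p.2} : Finset (Fin n)) = {q.1, q.2} → p = q := by
    rintro ⟨a, b⟩ hp ⟨c, d⟩ hq h
    simp only [Finset.mem_filter, Finset.mem_univ, true_and] at hp hq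
    have ha : a = c ∨ a = d := by
      have := h ▸ Finset.mem_insert_self a {b}
      simpa using this
    have hb : b = c ∨ b = d := by
      have := h ▸ Finset.mem_insert_of_mem (Finset.mem_singleton_self b)
      simpa using this
    have hc : c = a ∨ c = b := by
      have := h.symm ▸ Finset.mem_insert_self c {d}
      simpa using this
    simp only [Fin.ext_iff] at ha hb hc
    rw [Fin.lt_iff_val_lt_val] at hp hq
    have hfin : (a : ℕ) = c ∧ (b : ℕ) = d := by omega
    exact Prod.ext_iff.mpr ⟨Fin.ext hfin.1, Fin.ext hfin.2⟩
  rw [step1, step2, himg1, himg2,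
    Finset.sum_image (fun a _ b _ h => Finset.singleton_injective h),
    Finset.sum_image hinj]
  congr 1
  · exact Finset.sum_congr rfl fun i _ => by rw [hsing i]
  · exact Finset.sum_congr rfl fun p _ => by rw [hpair p.1 p.2]
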